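/- Let g : (0,∞) → ℝ be continuously differentiable with g(ρ) ≥ 0 and (ρ² g(ρ))' ≥ 0 for all ρ > 0, let ρ_l > 0 and define G(ρ) = ∫_ρ^{ρ_l} g(s) ds. Then ρ² g(ρ) → 0 as ρ → 0⁺ if and only if ρ·G(ρ) → 0 as ρ → 0⁺. -/

import Mathlib

open Filter Topology Set MeasureTheory intervalIntegral

/-- For `g ∈ C¹((0,∞))` with `g ≥ 0` and `(ρ² g(ρ))' ≥ 0`, and
`G(ρ) = ∫_ρ^{ρ_l} g(s) ds`, one has `ρ² g(ρ) → 0` as `ρ → 0⁺` iff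
`ρ·G(ρ) → 0` as `ρ → 0⁺`. -/
theorem stmt1 (g g' : ℝ → ℝ)
    (hg' : ∀ ρ > (0 : ℝ), HasDerivAt g (g' ρ) ρ)
    (hg'cont : ContinuousOn g' (Set.Ioi 0))
    (hgnonneg : ∀ ρ > (0 : ℝ), 0 ≤ g ρ)
    (hmono : ∀ ρ > (0 : ℝ), 0 ≤ 2 * ρ * g ρ + ρ ^ 2 * g' ρ)
    (ρl : ℝ) (hρl : 0 < ρl) :
    Tendsto (fun ρ => ρ ^ 2 * g ρ) (𝓝[>] (0 : ℝ)) (𝓝 0) ↔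
      Tendsto (fun ρ => ρ * ∫ s in ρ..ρl, g s) (𝓝[>] (0 : ℝ)) (𝓝 0) := by
  classical
  set f : ℝ → ℝ := fun ρ => ρ ^ 2 * g ρ with hfdef
  have hsub : ∀ a b : ℝ, 0 < a → 0 < b → Set.uIcc a b ⊆ Set.Ioi 0 := by
    intro a b ha hb x hx
    rw [Set.mem_uIcc] at hx
    rcases hx with ⟨h1, _⟩ | ⟨h1, _⟩
    · exact lt_of_lt_of_le ha h1
    · exact lt_of_lt_of_le hb h1
  have hgc : ContinuousOn g (Set.Ioi 0) := fun x hx =>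
    (hg' x hx).continuousAt.continuousWithinAt
  have hint : ∀ a b : ℝ, 0 < a → 0 < b → IntervalIntegrable g volume a b := fun a b ha hb =>
    (hgc.mono (hsub a b ha hb)).intervalIntegrable
  have hic : ContinuousOn (fun s : ℝ => (s ^ 2)⁻¹) (Set.Ioi 0) := by
    apply ContinuousOn.inv₀ (continuous_pow 2).continuousOn
    intro x hx
    exact pow_ne_zero 2 (ne_of_gt hx)
  have hint2 : ∀ (c a b : ℝ), 0 < a → 0 < b →
      IntervalIntegrable (fun s => c * (s ^ 2)⁻¹) volume a b := fun c a b ha hb =>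
    ((continuousOn_const.mul hic).mono (hsub a b ha hb)).intervalIntegrable
  have hkey : ∀ (c a b : ℝ), 0 < a → a ≤ b →
      (∫ s in a..b, c * (s ^ 2)⁻¹) = c * (a⁻¹ - b⁻¹) := by
    intro c a b ha hab
    have hb : 0 < b := lt_of_lt_of_le ha hab
    have hd : ∀ s ∈ Set.uIcc a b, HasDerivAt (fun s : ℝ => -(c * s⁻¹)) (c * (s ^ 2)⁻¹) s := by
      intro s hs
      have hs0 : s ≠ 0 := ne_of_gt (hsub a b ha hb hs)
      have h := ((hasDerivAt_inv hs0).const_mul c).neg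
      exact h.congr_deriv (by ring)
    rw [intervalIntegral.integral_eq_sub_of_hasDerivAt hd (hint2 c a b ha hb)]
    have ha0 : a ≠ 0 := ne_of_gt ha
    have hb0 : b ≠ 0 := ne_of_gt hb
    ring
  have hfd : ∀ x ∈ Set.Ioi (0 : ℝ), HasDerivAt f (2 * x * g x + x ^ 2 * g' x) x := by
    intro x hx
    have h := (hasDerivAt_pow 2 x).mul (hg' x hx)
    exact h.congr_deriv (by norm_num)
  have hfmono : MonotoneOn f (Set.Ioi 0) := by
    apply monotoneOn_of_deriv_nonneg (convex_Ioi 0)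
    · exact fun x hx => (hfd x hx).continuousAt.continuousWithinAt
    · rw [interior_Ioi]
      exact fun x hx => (hfd x hx).differentiableAt.differentiableWithinAt
    · rw [interior_Ioi]
      intro x hx
      rw [(hfd x hx).deriv]
      exact hmono x hx
  have hfnn : ∀ x > (0 : ℝ), 0 ≤ f x := fun x hx =>
    mul_nonneg (sq_nonneg x) (hgnonneg x hx)
  constructor
  · -- forward direction
    intro h1
    rw [Metric.tendsto_nhds] at h1 ⊢
    intro ε hε
    have hevδ : ∀ᶠ ρ in 𝓝[>] (0 : ℝ), dist (f ρ) 0 < ε / 2 := h1 (ε / 2) (by linarith)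
    have hevρl : ∀ᶠ ρ in 𝓝[>] (0 : ℝ), ρ < ρl := nhdsWithin_le_nhds (Iio_mem_nhds hρl)
    obtain ⟨δ, hδε, hδpos, hδρl⟩ := (hevδ.and (eventually_mem_nhdsWithin.and hevρl)).exists
    have hδpos : (0 : ℝ) < δ := hδpos
    set C := ∫ s in δ..ρl, g s with hCdef
    have hCnn : 0 ≤ C :=
      intervalIntegral.integral_nonneg (le_of_lt hδρl)
        (fun x hx => hgnonneg x (lt_of_lt_of_le hδpos hx.1))
    have hfδ : f δ < ε / 2 := by
      rw [Real.dist_eq, sub_zero, abs_of_nonneg (hfnn δ hδpos)] at hδε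
      exact hδε
    have hmin : (0 : ℝ) < min δ (ε / (2 * (C + 1))) := lt_min hδpos (by positivity)
    filter_upwards [self_mem_nhdsWithin, nhdsWithin_le_nhds (Iio_mem_nhds hmin)] with ρ hρ hρ'
    have hρpos : (0 : ℝ) < ρ := hρ
    have hρmin : ρ < min δ (ε / (2 * (C + 1))) := hρ'
    have hρδ : ρ < δ := lt_of_lt_of_le hρmin (min_le_left _ _)
    have hρε : ρ < ε / (2 * (C + 1)) := lt_of_lt_of_le hρmin (min_le_right _ _)
    have hρρl : ρ ≤ ρl := le_of_lt (lt_trans hρδ hδρl)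
    have hsplit : (∫ s in ρ..ρl, g s) = (∫ s in ρ..δ, g s) + C :=
      (intervalIntegral.integral_add_adjacent_intervals (hint ρ δ hρpos hδpos)
        (hint δ ρl hδpos hρl)).symm
    have hub : (∫ s in ρ..δ, g s) ≤ f δ * (ρ⁻¹ - δ⁻¹) := by
      rw [← hkey (f δ) ρ δ hρpos (le_of_lt hρδ)]
      apply intervalIntegral.integral_mono_on (le_of_lt hρδ) (hint ρ δ hρpos hδpos)
        (hint2 _ _ _ hρpos hδpos)
      intro s hs
      have hs0 : 0 < s := lt_of_lt_of_le hρpos hs.1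
      have hfs : f s ≤ f δ := hfmono hs0 hδpos hs.2
      have hgs : g s = f s * (s ^ 2)⁻¹ := by
        simp only [hfdef]
        field_simp
      rw [hgs]
      exact mul_le_mul_of_nonneg_right hfs (by positivity)
    have h1le : ρ * (∫ s in ρ..δ, g s) ≤ f δ := by
      have hle := mul_le_mul_of_nonneg_left hub (le_of_lt hρpos)
      have heq : ρ * (f δ * (ρ⁻¹ - δ⁻¹)) = f δ * (1 - ρ / δ) := by
        field_simp
      rw [heq] at hle
      nlinarith [hfnn δ hδpos, div_nonneg hρpos.le hδpos.le]
    have h2le : ρ * C < ε / 2 := by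
      have h := (lt_div_iff₀ (by positivity : (0:ℝ) < 2 * (C + 1))).mp hρε
      nlinarith
    rw [Real.dist_eq, sub_zero]
    have hGnn : 0 ≤ ∫ s in ρ..ρl, g s :=
      intervalIntegral.integral_nonneg hρρl
        (fun x hx => hgnonneg x (lt_of_lt_of_le hρpos hx.1))
    rw [abs_of_nonneg (mul_nonneg hρpos.le hGnn), hsplit, mul_add]
    linarith
  · -- reverse direction
    intro h2
    have hev1 : ∀ᶠ ρ in 𝓝[>] (0 : ℝ), 0 ≤ f ρ := by
      filter_upwards [self_mem_nhdsWithin] with ρ hρ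
      exact hfnn ρ hρ
    have hev2 : ∀ᶠ ρ in 𝓝[>] (0 : ℝ), f ρ ≤ 2 * (ρ * ∫ s in ρ..ρl, g s) := by
      filter_upwards [self_mem_nhdsWithin,
        nhdsWithin_le_nhds (Iio_mem_nhds (half_pos hρl))] with ρ hρ hρ2
      have hρpos : (0 : ℝ) < ρ := hρ
      have hρ2' : ρ < ρl / 2 := hρ2
      have hρρl : ρ ≤ ρl := by linarith
      have hlow : f ρ * (ρ⁻¹ - ρl⁻¹) ≤ ∫ s in ρ..ρl, g s := by
        rw [← hkey (f ρ) ρ ρl hρpos hρρl]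
        apply intervalIntegral.integral_mono_on hρρl (hint2 _ _ _ hρpos hρl)
          (hint ρ ρl hρpos hρl)
        intro s hs
        have hs0 : 0 < s := lt_of_lt_of_le hρpos hs.1
        have hfs : f ρ ≤ f s := hfmono hρpos hs0 hs.1
        have hgs : g s = f s * (s ^ 2)⁻¹ := by
          simp only [hfdef]
          field_simp
        rw [hgs]
        exact mul_le_mul_of_nonneg_right hfs (by positivity)
      have hle := mul_le_mul_of_nonneg_left hlow hρpos.le
      have heq : ρ * (f ρ * (ρ⁻¹ - ρl⁻¹)) = f ρ * (1 - ρ / ρl) := by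
        field_simp
      rw [heq] at hle
      have h12 : ρ / ρl ≤ 1 / 2 := by
        rw [div_le_div_iff₀ hρl (by norm_num : (0:ℝ) < 2)]
        linarith
      nlinarith [hfnn ρ hρpos]
    have h2' : Tendsto (fun ρ => 2 * (ρ * ∫ s in ρ..ρl, g s)) (𝓝[>] (0 : ℝ)) (𝓝 0) := by
      have h := h2.const_mul 2
      simpa using h
    exact squeeze_zero' hev1 hev2 h2'
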